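/- Let S be a set with |S| = 3 and let P be an irreducible stochastic matrix on S. Then every probability measure μ consistent with P is a block measure: there exists a partition 𝒮 = {S_1, …, S_l} of S such that for every f ∈ supp(μ) there is a permutation π_f of {1,…,l} with f(S_r) ⊆ S_{π_f(r)} for all r, and k(μ) = l. -/

import Mathlib

open MeasureTheory

namespace CFTP

variable {S : Type*}

/-- Forward composition `f_t ∘ f_{t-1} ∘ ⋯ ∘ f_1` (functions are indexed by 1,2,…). -/
def fwd (f : ℕ → S → S) : ℕ → S → S
  | 0 => id
  | t + 1 => f (t + 1) ∘ fwd f t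

/-- Backward composition `f_1 ∘ f_2 ∘ ⋯ ∘ f_t`. -/
def bwd (f : ℕ → S → S) : ℕ → S → S
  | 0 => id
  | t + 1 => bwd f t ∘ f (t + 1)

/-- `k_t(f⃗)`: the number of equivalence classes of `i ~ j ↔ f⃗_t i = f⃗_t j`,
i.e. the cardinality of the image of the forward composition. -/
noncomputable def ktF (f : ℕ → S → S) (t : ℕ) : ℕ := Set.ncard (Set.range (fwd f t))

/-- `k_t(f⃖)`: the cardinality of the image of the backward composition. -/
noncomputable def ktB (f : ℕ → S → S) (t : ℕ) : ℕ := Set.ncard (Set.range (bwd f t))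

/-- `k(f⃗)`: the eventual (= minimal) value of the non-increasing sequence `k_t(f⃗)`. -/
noncomputable def kF (f : ℕ → S → S) : ℕ := ⨅ t, ktF f t

/-- `k(f⃖)`. -/
noncomputable def kB (f : ℕ → S → S) : ℕ := ⨅ t, ktB f t

/-- `μbar` is the joint law of an i.i.d. sequence with one-step law `ν`,
i.e. the countable product measure `∏_{s ∈ ℕ} ν`, characterised by its
values on cylinder events. -/
def IsIID [MeasurableSpace S] (ν : Measure (S → S)) (μbar : Measure (ℕ → S → S)) : Prop :=
  ∀ (I : Finset ℕ) (g : ℕ → S → S),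
    μbar {F | ∀ s ∈ I, F s = g s} = ∏ s ∈ I, ν {g s}

/-- The support of a probability measure on the finite set `F_S`. -/
def supp [MeasurableSpace S] (ν : Measure (S → S)) : Set (S → S) := {f | 0 < ν {f}}

/-- A stochastic matrix: nonnegative entries, row sums one. -/
def IsStochastic [Fintype S] (P : S → S → ℝ) : Prop :=
  (∀ i j, 0 ≤ P i j) ∧ ∀ i, ∑ j, P i j = 1

/-- `ν ∈ L(P)`: the measure `ν` on `F_S` is consistent with the matrix `P`. -/
def Consistent [Fintype S] [MeasurableSpace S] (P : S → S → ℝ) (ν : Measure (S → S)) : Prop :=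
  ∀ i j, ν {f : S → S | f i = j} = ENNReal.ofReal (P i j)

/-- Irreducibility: for all `i j` some power of `P` has positive `(i,j)` entry. -/
def Irred [Fintype S] [DecidableEq S] (P : S → S → ℝ) : Prop :=
  ∀ i j, ∃ t, 1 ≤ t ∧ 0 < ((Matrix.of P) ^ t) i j

/-- Aperiodicity: for each `i`, the gcd of `{t ≥ 1 : (P^t)_{i,i} > 0}` is `1`,
expressed as: every common divisor of that set equals `1`. -/
def Aperiodic [Fintype S] [DecidableEq S] (P : S → S → ℝ) : Prop :=
  ∀ i, ∀ d : ℕ, (∀ t, 1 ≤ t → 0 < ((Matrix.of P) ^ t) i i → d ∣ t) → d = 1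

/-- A function is constant. -/
def IsConst (g : S → S) : Prop := ∀ i j, g i = g j

/-- The backward coalescence time `C`. -/
noncomputable def Ctime (F : ℕ → S → S) : ℕ∞ :=
  sInf ((fun t : ℕ => (t : ℕ∞)) '' {t : ℕ | 1 ≤ t ∧ IsConst (bwd F t)})

/-- The forward coalescence time `T`. -/
noncomputable def Ttime (F : ℕ → S → S) : ℕ∞ :=
  sInf ((fun t : ℕ => (t : ℕ∞)) '' {t : ℕ | 1 ≤ t ∧ IsConst (fwd F t)})

/-- The 0-1 matrix `M_f`. -/
noncomputable def Mmat [Fintype S] [DecidableEq S] (f : S → S) : Matrix S S ℝ :=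
  Matrix.of fun i j => if f i = j then 1 else 0

/-- The product `M_{f_t} M_{f_{t-1}} ⋯ M_{f_1}`. -/
noncomputable def Mprod [Fintype S] [DecidableEq S] (f : ℕ → S → S) : ℕ → Matrix S S ℝ
  | 0 => 1
  | t + 1 => Mmat (f (t + 1)) * Mprod f t

/-- The event that states `i` and `j` coalesce. -/
def coalEvent (i j : S) : Set (ℕ → S → S) := {F | ∃ t, 1 ≤ t ∧ fwd F t i = fwd F t j}


-- ===================== auxiliary development =====================

section Aux

/-- Compositions of elements of `T` (words of length ≥ 1). -/
inductive Word (T : Set (S → S)) : (S → S) → Prop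
  | base (f : S → S) (hf : f ∈ T) : Word T f
  | comp (f w : S → S) (hf : f ∈ T) (hw : Word T w) : Word T (f ∘ w)

lemma Word.comp_word {T : Set (S → S)} {v w : S → S} (hv : Word T v) (hw : Word T w) :
    Word T (v ∘ w) := by
  induction hv with
  | base f hf => exact .comp f w hf hw
  | comp f v' hf _ ih => exact (Function.comp_assoc f v' w) ▸ Word.comp f (v' ∘ w) hf ih

lemma fwd_congr {F g : ℕ → S → S} {t : ℕ} (h : ∀ s, 1 ≤ s → s ≤ t → F s = g s) :
    fwd F t = fwd g t := by
  induction t with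
  | zero => rfl
  | succ t ih =>
    show F (t+1) ∘ fwd F t = g (t+1) ∘ fwd g t
    rw [h (t+1) (by omega) le_rfl, ih (fun s h1 h2 => h s h1 (by omega))]

lemma fwd_one (g : ℕ → S → S) : fwd g 1 = g 1 := by
  show g 1 ∘ id = g 1
  exact Function.comp_id _

lemma fwd_word {T : Set (S → S)} {g : ℕ → S → S} (hg : ∀ s, g s ∈ T) :
    ∀ t, 1 ≤ t → Word T (fwd g t) := by
  intro t
  induction t with
  | zero => omega
  | succ t ih =>
    intro _
    rcases Nat.eq_zero_or_pos t with h0 | h1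
    · subst h0; rw [fwd_one]; exact .base _ (hg 1)
    · exact .comp _ _ (hg (t+1)) (ih h1)

lemma word_seq {T : Set (S → S)} {w : S → S} (hw : Word T w) :
    ∃ t, 1 ≤ t ∧ ∃ g : ℕ → S → S, (∀ s, g s ∈ T) ∧ fwd g t = w := by
  induction hw with
  | base f hf => exact ⟨1, le_rfl, fun _ => f, fun _ => hf, fwd_one _⟩
  | comp f w' hf hw' ih =>
    obtain ⟨t, ht, g, hg, hfwd⟩ := ih
    refine ⟨t+1, by omega, fun s => if s = t+1 then f else g s, ?_, ?_⟩
    · intro s; dsimp only; split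
      · exact hf
      · exact hg s
    · show (if t+1 = t+1 then f else g (t+1)) ∘ fwd _ t = f ∘ w'
      rw [if_pos rfl, fwd_congr (g := g) (fun s h1 h2 => if_neg (by omega)), hfwd]

lemma ncard_range_le_one [Nonempty S] {w : S → S} (h : ∀ x y : S, w x = w y) :
    (Set.range w).ncard ≤ 1 := by
  have hsub : Set.range w ⊆ {w (Classical.arbitrary S)} := by
    rintro _ ⟨x, rfl⟩; exact h x _
  calc (Set.range w).ncard ≤ ({w (Classical.arbitrary S)} : Set S).ncard :=
        Set.ncard_le_ncard hsub (Set.finite_singleton _)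
    _ = 1 := Set.ncard_singleton _

lemma ncard_range_noninj [Fintype S] (hcard : Fintype.card S = 3) {w : S → S} {x y : S}
    (hxy : x ≠ y) (h : w x = w y) : (Set.range w).ncard ≤ 2 := by
  have hsub : Set.range w ⊆ w '' {y}ᶜ := by
    rintro _ ⟨z, rfl⟩
    by_cases hz : z = y
    · subst hz; exact ⟨x, hxy, h⟩
    · exact ⟨z, hz, rfl⟩
  have h1 : (Set.range w).ncard ≤ (({y}ᶜ : Set S)).ncard :=
    le_trans (Set.ncard_le_ncard hsub (Set.toFinite _)) (Set.ncard_image_le (Set.toFinite _))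
  have h2 : (({y}ᶜ : Set S)).ncard = 2 := by
    rw [Set.compl_eq_univ_diff, Set.ncard_diff_singleton_of_mem (Set.mem_univ y),
      Set.ncard_univ, Nat.card_eq_fintype_card, hcard]
  omega

lemma ncard_range_inj [Fintype S] {w : S → S} (hw : Function.Injective w) :
    (Set.range w).ncard = Fintype.card S := by
  rw [Set.range_eq_univ.mpr (Finite.injective_iff_surjective.mp hw), Set.ncard_univ,
    Nat.card_eq_fintype_card]

lemma kF_le (f : ℕ → S → S) (t : ℕ) : kF f ≤ ktF f t :=
  ciInf_le (OrderBot.bddBelow _) t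

lemma le_kF (f : ℕ → S → S) (m : ℕ) (h : ∀ t, m ≤ ktF f t) : m ≤ kF f :=
  le_ciInf h

lemma kF_exists (f : ℕ → S → S) : ∃ t, ktF f t = kF f := by
  have : kF f ∈ Set.range (ktF f) := Nat.sInf_mem (Set.range_nonempty _)
  exact this

lemma one_le_ktF [Fintype S] [Nonempty S] (f : ℕ → S → S) (t : ℕ) : 1 ≤ ktF f t := by
  have : (Set.range (fwd f t)).Nonempty := Set.range_nonempty _
  exact (Set.ncard_pos (Set.toFinite _)).mpr this

lemma ktF_zero [Fintype S] (f : ℕ → S → S) : ktF f 0 = Fintype.card S := by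
  show (Set.range (id : S → S)).ncard = _
  rw [Set.range_id, Set.ncard_univ, Nat.card_eq_fintype_card]

/-- `x` and `y` can be merged by some word. -/
def SyncW (T : Set (S → S)) (x y : S) : Prop := ∃ w, Word T w ∧ w x = w y

lemma no_two_sync (T : Set (S → S))
    (hno1 : ∀ w, Word T w → ∃ x y, w x ≠ w y)
    (hreach : ∀ i j : S, ∃ w, Word T w ∧ w i = j)
    (a b c : S) (hab : a ≠ b) (hac : a ≠ c) (hbc : b ≠ c)
    (hcov : ∀ x : S, x = a ∨ x = b ∨ x = c)
    (hsab : SyncW T a b) (hsac : SyncW T a c) : False := by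
  obtain ⟨w1, hw1, h1⟩ := hsab
  set u := w1 a with hu
  set v := w1 c with hv
  have huv : u ≠ v := by
    intro h
    have hconst : ∀ x : S, w1 x = u := by
      intro x; rcases hcov x with rfl | rfl | rfl
      · rfl
      · exact h1.symm
      · exact h.symm
    obtain ⟨x, y, hxy⟩ := hno1 w1 hw1
    exact hxy ((hconst x).trans (hconst y).symm)
  have himg : ∀ x : S, w1 x = u ∨ w1 x = v := by
    intro x; rcases hcov x with rfl | rfl | rfl
    · exact Or.inl rfl
    · exact Or.inl h1.symm
    · exact Or.inr rfl
  have key : ∀ σ, Word T σ → σ u ≠ a := by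
    intro σ hσ hσu
    have hσw : Word T (σ ∘ w1) := hσ.comp_word hw1
    have hσuv : σ u ≠ σ v := by
      intro h
      have hconst : ∀ x : S, σ (w1 x) = σ u := by
        intro x; rcases himg x with hx | hx <;> rw [hx]; exact h.symm
      obtain ⟨x, y, hxy⟩ := hno1 (σ ∘ w1) hσw
      exact hxy ((hconst x).trans (hconst y).symm)
    have hnsync : ¬ SyncW T (σ u) (σ v) := by
      rintro ⟨τ, hτ, hτe⟩
      have hτw : Word T (τ ∘ σ ∘ w1) := hτ.comp_word hσw
      have hconst : ∀ x : S, τ (σ (w1 x)) = τ (σ u) := by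
        intro x; rcases himg x with hx | hx <;> rw [hx]
        exact hτe.symm
      obtain ⟨x, y, hxy⟩ := hno1 (τ ∘ σ ∘ w1) hτw
      exact hxy ((hconst x).trans (hconst y).symm)
    rcases hcov (σ v) with hc | hc | hc
    · exact hσuv (hσu.trans hc.symm)
    · exact hnsync (by rw [hσu, hc]; exact ⟨w1, hw1, h1⟩)
    · exact hnsync (by rw [hσu, hc]; exact hsac)
  obtain ⟨σ, hσ, hσu⟩ := hreach u a
  exact key σ hσ hσu

lemma core [Fintype S] [DecidableEq S] (hcard : Fintype.card S = 3) (T : Set (S → S))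
    (hno1 : ∀ w, Word T w → ∃ x y, w x ≠ w y)
    (h2 : ∃ w, Word T w ∧ ∃ x y : S, x ≠ y ∧ w x = w y)
    (hreach : ∀ i j : S, ∃ w, Word T w ∧ w i = j) :
    ∃ a b c : S, a ≠ b ∧ a ≠ c ∧ b ≠ c ∧ (∀ x : S, x = a ∨ x = b ∨ x = c) ∧
      ∀ f ∈ T, ((f a = a ∨ f a = b) ∧ (f b = a ∨ f b = b) ∧ f c = c) ∨
               (f a = c ∧ f b = c ∧ (f c = a ∨ f c = b)) := by
  obtain ⟨w1, hw1, a, b, hab, h1⟩ := h2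
  have hthird : ∃ c : S, c ≠ a ∧ c ≠ b := by
    by_contra h
    push_neg at h
    have hsub : (Finset.univ : Finset S) ⊆ {a, b} := by
      intro x _
      rcases eq_or_ne x a with rfl | hx
      · simp
      · simp [h x hx]
    have hle := Finset.card_le_card hsub
    have h2' : ({a, b} : Finset S).card ≤ 2 :=
      le_trans (Finset.card_insert_le _ _) (by simp)
    rw [Finset.card_univ, hcard] at hle
    omega
  obtain ⟨c, hca, hcb⟩ := hthird
  have hac : a ≠ c := hca.symm
  have hbc : b ≠ c := hcb.symm
  have hcov : ∀ x : S, x = a ∨ x = b ∨ x = c := by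
    have hcd : ({a, b, c} : Finset S).card = 3 := by
      rw [Finset.card_insert_of_notMem (by simp [hab, hac]),
        Finset.card_insert_of_notMem (by simp [hbc]), Finset.card_singleton]
    have huniv := Finset.eq_univ_of_card _ (hcd.trans hcard.symm)
    intro x
    have : x ∈ ({a, b, c} : Finset S) := huniv ▸ Finset.mem_univ x
    simpa using this
  have hnac : ¬ SyncW T a c := fun h =>
    no_two_sync T hno1 hreach a b c hab hac hbc hcov ⟨w1, hw1, h1⟩ h
  have hnbc : ¬ SyncW T b c := fun h =>
    no_two_sync T hno1 hreach b a c hab.symm hbc hac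
      (fun x => by rcases hcov x with h | h | h <;> tauto) ⟨w1, hw1, h1.symm⟩ h
  have hpair : ∀ p q : S, p ≠ q → SyncW T p q → (p = a ∧ q = b) ∨ (p = b ∧ q = a) := by
    intro p q hpq hs
    have hsymm : SyncW T q p := ⟨hs.choose, hs.choose_spec.1, hs.choose_spec.2.symm⟩
    rcases hcov p with rfl | rfl | rfl <;> rcases hcov q with rfl | rfl | rfl
    · exact absurd rfl hpq
    · exact Or.inl ⟨rfl, rfl⟩
    · exact absurd hs hnac
    · exact Or.inr ⟨rfl, rfl⟩
    · exact absurd rfl hpq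
    · exact absurd hs hnbc
    · exact absurd hsymm hnac
    · exact absurd hsymm hnbc
    · exact absurd rfl hpq
  set u := w1 a with hu
  set v := w1 c with hv
  have himg : ∀ x : S, w1 x = u ∨ w1 x = v := by
    intro x; rcases hcov x with rfl | rfl | rfl
    · exact Or.inl rfl
    · exact Or.inl h1.symm
    · exact Or.inr rfl
  refine ⟨a, b, c, hab, hac, hbc, hcov, ?_⟩
  intro f hf
  have hfword : Word T f := .base f hf
  have hwf : Word T (w1 ∘ f) := hw1.comp_word hfword
  have hmergef : w1 (f a) = w1 (f b) := by
    have sync_of : ∀ p q : S, p ≠ q → w1 (f p) = w1 (f q) → SyncW T p q := by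
      intro p q hpq he
      exact ⟨w1 ∘ f, hwf, he⟩
    rcases himg (f a) with ha' | ha' <;> rcases himg (f b) with hb' | hb' <;>
      rcases himg (f c) with hc' | hc'
    · exact ha'.trans hb'.symm
    · exact ha'.trans hb'.symm
    · exact absurd (sync_of a c hac (ha'.trans hc'.symm)) hnac
    · exact absurd (sync_of b c hbc (hb'.trans hc'.symm)) hnbc
    · exact absurd (sync_of b c hbc (hb'.trans hc'.symm)) hnbc
    · exact absurd (sync_of a c hac (ha'.trans hc'.symm)) hnac
    · exact ha'.trans hb'.symm
    · exact ha'.trans hb'.symm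
  by_cases hfab : f a = f b
  · rcases hcov (f a) with hd | hd | hd
    · have hfc : f c = c := by
        by_contra hne
        have hfcab : f c = a ∨ f c = b := by
          rcases hcov (f c) with h | h | h <;> tauto
        have hconst : ∀ x : S, w1 (f x) = u := by
          intro x
          rcases hcov x with rfl | rfl | rfl
          · rw [hd]
          · rw [← hfab, hd]
          · rcases hfcab with h | h
            · rw [h]
            · rw [h]; exact h1.symm
        obtain ⟨x, y, hxy⟩ := hno1 (w1 ∘ f) hwf
        exact hxy ((hconst x).trans (hconst y).symm)
      exact Or.inl ⟨Or.inl hd, Or.inl (hfab ▸ hd), hfc⟩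
    · have hfc : f c = c := by
        by_contra hne
        have hfcab : f c = a ∨ f c = b := by
          rcases hcov (f c) with h | h | h <;> tauto
        have hconst : ∀ x : S, w1 (f x) = u := by
          intro x
          rcases hcov x with rfl | rfl | rfl
          · rw [hd]; exact h1.symm
          · rw [← hfab, hd]; exact h1.symm
          · rcases hfcab with h | h
            · rw [h]
            · rw [h]; exact h1.symm
        obtain ⟨x, y, hxy⟩ := hno1 (w1 ∘ f) hwf
        exact hxy ((hconst x).trans (hconst y).symm)
      exact Or.inl ⟨Or.inr hd, Or.inr (hfab ▸ hd), hfc⟩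
    · have hfc : f c = a ∨ f c = b := by
        rcases hcov (f c) with h | h | h
        · tauto
        · tauto
        · exfalso
          have hconst : ∀ x : S, f x = c := by
            intro x; rcases hcov x with rfl | rfl | rfl
            · exact hd
            · exact hfab ▸ hd
            · exact h
          obtain ⟨x, y, hxy⟩ := hno1 f hfword
          exact hxy ((hconst x).trans (hconst y).symm)
      exact Or.inr ⟨hd, hfab ▸ hd, hfc⟩
  · have hsfab : SyncW T (f a) (f b) := ⟨w1, hw1, hmergef⟩
    have hset := hpair (f a) (f b) hfab hsfab
    have hfc : f c = c := by
      by_contra hne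
      have hfcab : f c = a ∨ f c = b := by
        rcases hcov (f c) with h | h | h <;> tauto
      have : SyncW T a c ∨ SyncW T b c := by
        rcases hset with ⟨he1, he2⟩ | ⟨he1, he2⟩ <;> rcases hfcab with h | h
        · exact Or.inl ⟨f, hfword, he1.trans h.symm⟩
        · exact Or.inr ⟨f, hfword, he2.trans h.symm⟩
        · exact Or.inr ⟨f, hfword, he2.trans h.symm⟩
        · exact Or.inl ⟨f, hfword, he1.trans h.symm⟩
      rcases this with h | h
      · exact hnac h
      · exact hnbc h
    rcases hset with ⟨he1, he2⟩ | ⟨he1, he2⟩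
    · exact Or.inl ⟨Or.inl he1, Or.inr he2, hfc⟩
    · exact Or.inl ⟨Or.inr he1, Or.inl he2, hfc⟩

lemma measurableSet_singleton_fun [Fintype S] [MeasurableSpace S] [DiscreteMeasurableSpace S]
    (h : S → S) : MeasurableSet {h} := by
  have he : ({h} : Set (S → S)) = ⋂ i : S, (fun f : S → S => f i) ⁻¹' {h i} := by
    ext f; simp [funext_iff]
  rw [he]
  exact MeasurableSet.iInter fun i => measurable_pi_apply i MeasurableSet.of_discrete

lemma exists_mem_supp [Fintype S] [DecidableEq S] [MeasurableSpace S]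
    {P : S → S → ℝ} {ν : Measure (S → S)} (hcons : Consistent P ν) {i j : S}
    (h : 0 < P i j) : ∃ f ∈ supp ν, f i = j := by
  have hpos : ν {f : S → S | f i = j} ≠ 0 := by
    rw [hcons i j]; exact (ENNReal.ofReal_pos.mpr h).ne'
  by_contra hcon
  push_neg at hcon
  apply hpos
  have he : {f : S → S | f i = j} = ⋃ f ∈ {f : S → S | f i = j}, {f} :=
    (Set.biUnion_of_singleton _).symm
  rw [he, measure_biUnion_null_iff (Set.to_countable _)]
  intro f hf
  by_contra hne
  exact hcon f (pos_iff_ne_zero.mpr hne) hf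

lemma pow_apply_nonneg [Fintype S] [DecidableEq S] {P : S → S → ℝ} (h0 : ∀ i j, 0 ≤ P i j) :
    ∀ t (i j : S), 0 ≤ ((Matrix.of P) ^ t) i j := by
  intro t
  induction t with
  | zero =>
    intro i j; rw [pow_zero, Matrix.one_apply]
    split <;> norm_num
  | succ t ih =>
    intro i j
    rw [pow_succ, Matrix.mul_apply]
    exact Finset.sum_nonneg fun m _ => mul_nonneg (ih i m) (h0 m j)

lemma reach [Fintype S] [DecidableEq S] [MeasurableSpace S]
    {P : S → S → ℝ} (hP : IsStochastic P) {ν : Measure (S → S)} (hcons : Consistent P ν) :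
    ∀ t, 1 ≤ t → ∀ i j : S, 0 < ((Matrix.of P) ^ t) i j →
      ∃ w, Word (supp ν) w ∧ w i = j := by
  intro t
  induction t with
  | zero => omega
  | succ t ih =>
    intro _ i j hpos
    rcases Nat.eq_zero_or_pos t with h0 | h1
    · subst h0
      rw [pow_one] at hpos
      obtain ⟨f, hf, hfi⟩ := exists_mem_supp hcons (show 0 < P i j from hpos)
      exact ⟨f, .base f hf, hfi⟩
    · rw [pow_succ, Matrix.mul_apply] at hpos
      have hex : ∃ m, 0 < ((Matrix.of P) ^ t) i m * (Matrix.of P) m j := by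
        by_contra h
        push_neg at h
        have := Finset.sum_nonpos (fun m (_ : m ∈ Finset.univ) => h m)
        linarith
      obtain ⟨m, hm⟩ := hex
      have h1k : 0 < ((Matrix.of P) ^ t) i m := by
        rcases lt_or_eq_of_le (pow_apply_nonneg hP.1 t i m) with h | h
        · exact h
        · rw [← h, zero_mul] at hm; exact absurd hm (lt_irrefl 0)
      have h2k : 0 < P m j := by
        rcases lt_or_eq_of_le (hP.1 m j) with h | h
        · exact h
        · exfalso
          rw [show (Matrix.of P) m j = P m j from rfl, ← h, mul_zero] at hm
          exact lt_irrefl 0 hm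
      obtain ⟨w, hw, hwim⟩ := ih h1 i m h1k
      obtain ⟨f, hf, hfmj⟩ := exists_mem_supp hcons h2k
      exact ⟨f ∘ w, Word.comp f w hf hw, by show f (w i) = j; rw [hwim]; exact hfmj⟩

end Aux

-- STATEMENT 9
theorem stmt9 [Fintype S] [DecidableEq S]
    [MeasurableSpace S] [DiscreteMeasurableSpace S]
    (hcard : Fintype.card S = 3)
    (P : S → S → ℝ) (hP : IsStochastic P) (hirr : Irred P)
    (ν : Measure (S → S)) [IsProbabilityMeasure ν] (hcons : Consistent P ν)
    (μbar : Measure (ℕ → S → S)) [IsProbabilityMeasure μbar] (hiid : IsIID ν μbar)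
    (k : ℕ) (hk : μbar {F | kF F = k} = 1) :
    ∃ (l : ℕ) (B : Fin l → Finset S),
      (∀ r, (B r).Nonempty) ∧
      (∀ r s, r ≠ s → Disjoint (B r) (B s)) ∧
      (∀ i : S, ∃ r, i ∈ B r) ∧
      (∀ f ∈ supp ν, ∃ π : Equiv.Perm (Fin l), ∀ r, ∀ i ∈ B r, f i ∈ B (π r)) ∧
      k = l := by
  classical
  haveI hne : Nonempty S := Fintype.card_pos_iff.mp (by omega)
  obtain ⟨F0, hF0⟩ := nonempty_of_measure_ne_zero (show μbar {F | kF F = k} ≠ 0 by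
    rw [hk]; exact one_ne_zero)
  have hF0k : kF F0 = k := hF0
  have hk1 : 1 ≤ k := by
    obtain ⟨t0, ht0⟩ := kF_exists F0
    have h1 := one_le_ktF F0 t0
    omega
  have hk3 : k ≤ 3 := by
    have h1 := kF_le F0 0
    rw [ktF_zero, hcard] at h1
    omega
  -- key upper bound: k is at most the rank of any word
  have keyle : ∀ (g : ℕ → S → S) (t : ℕ), (∀ s, g s ∈ supp ν) →
      k ≤ Set.ncard (Set.range (fwd g t)) := by
    intro g t hg
    have hEmeas : MeasurableSet {F : ℕ → S → S | ∀ s ∈ Finset.Icc 1 t, F s = g s} := by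
      have he : {F : ℕ → S → S | ∀ s ∈ Finset.Icc 1 t, F s = g s}
          = ⋂ s ∈ Finset.Icc 1 t, (fun F : ℕ → S → S => F s) ⁻¹' {g s} := by
        ext F; simp
      rw [he]
      exact MeasurableSet.iInter fun s => MeasurableSet.iInter fun _ =>
        measurable_pi_apply s (measurableSet_singleton_fun (g s))
    have hEpos : μbar {F : ℕ → S → S | ∀ s ∈ Finset.Icc 1 t, F s = g s} ≠ 0 := by
      rw [hiid (Finset.Icc 1 t) g]
      exact (CanonicallyOrderedAdd.prod_pos.mpr (fun s _ => hg s)).ne'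
    have hAE : ({F : ℕ → S → S | kF F = k}
        ∩ {F : ℕ → S → S | ∀ s ∈ Finset.Icc 1 t, F s = g s}).Nonempty := by
      by_contra h
      rw [Set.not_nonempty_iff_eq_empty] at h
      have hsub : {F : ℕ → S → S | kF F = k}
          ⊆ {F : ℕ → S → S | ∀ s ∈ Finset.Icc 1 t, F s = g s}ᶜ := by
        intro F hF hFE
        exact Set.eq_empty_iff_forall_notMem.mp h F ⟨hF, hFE⟩
      have hle1 : (1 : ENNReal) ≤ μbar {F : ℕ → S → S | ∀ s ∈ Finset.Icc 1 t, F s = g s}ᶜ := by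
        rw [← hk]; exact measure_mono hsub
      rw [measure_compl hEmeas (measure_ne_top _ _), measure_univ] at hle1
      have hlt : (1 : ENNReal) - μbar {F : ℕ → S → S | ∀ s ∈ Finset.Icc 1 t, F s = g s} < 1 :=
        ENNReal.sub_lt_self ENNReal.one_ne_top one_ne_zero hEpos
      exact absurd (lt_of_le_of_lt hle1 hlt) (lt_irrefl _)
    obtain ⟨F, hFk, hFE⟩ := hAE
    have hfe : fwd F t = fwd g t :=
      fwd_congr (fun s h1 h2 => hFE s (Finset.mem_Icc.mpr ⟨h1, h2⟩))
    calc k = kF F := hFk.symm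
      _ ≤ ktF F t := kF_le F t
      _ = Set.ncard (Set.range (fwd g t)) := by unfold ktF; rw [hfe]
  -- there is an F with kF F = k whose coordinates all lie in the support
  have keyC : ∃ F : ℕ → S → S, kF F = k ∧ ∀ s, F s ∈ supp ν := by
    have hC : μbar {F : ℕ → S → S | ∀ s, F s ∈ supp ν}ᶜ = 0 := by
      have hsub : {F : ℕ → S → S | ∀ s, F s ∈ supp ν}ᶜ ⊆
          ⋃ (s : ℕ) (f : S → S) (_ : f ∉ supp ν), {F : ℕ → S → S | F s = f} := by
        intro F hF
        simp only [Set.mem_compl_iff, Set.mem_setOf_eq, not_forall] at hF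
        obtain ⟨s, hs⟩ := hF
        simp only [Set.mem_iUnion]
        exact ⟨s, F s, hs, rfl⟩
      refine measure_mono_null hsub ?_
      refine measure_iUnion_null (μ := μbar) fun s =>
        measure_iUnion_null (μ := μbar) fun f =>
          measure_iUnion_null (μ := μbar) fun hf => ?_
      have hsing : μbar {F : ℕ → S → S | F s = f} = ν {f} := by
        have := hiid {s} (fun _ => f)
        simpa using this
      rw [hsing]
      by_contra hne'
      exact hf (pos_iff_ne_zero.mpr hne')
    by_contra h
    push_neg at h
    have hsub : {F : ℕ → S → S | kF F = k} ⊆ {F : ℕ → S → S | ∀ s, F s ∈ supp ν}ᶜ := by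
      intro F hF
      simp only [Set.mem_compl_iff, Set.mem_setOf_eq, not_forall]
      exact h F hF
    have hmono : μbar {F : ℕ → S → S | kF F = k}
        ≤ μbar {F : ℕ → S → S | ∀ s, F s ∈ supp ν}ᶜ := measure_mono hsub
    rw [hk, hC] at hmono
    exact absurd hmono (by norm_num)
  have hcases : k = 1 ∨ k = 2 ∨ k = 3 := by omega
  rcases hcases with rfl | rfl | rfl
  · -- k = 1 : trivial partition
    refine ⟨1, fun _ => Finset.univ, fun _ => Finset.univ_nonempty, ?_,
      fun i => ⟨0, Finset.mem_univ i⟩, ?_, rfl⟩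
    · intro r s hrs
      exact absurd (Subsingleton.elim r s) hrs
    · intro f _
      exact ⟨1, fun r i _ => Finset.mem_univ _⟩
  · -- k = 2 : the block structure from the combinatorial core
    have hno1 : ∀ w, Word (supp ν) w → ∃ x y : S, w x ≠ w y := by
      intro w hw
      by_contra h
      push_neg at h
      obtain ⟨t, ht, g, hg, hfwd⟩ := word_seq hw
      have hle := keyle g t hg
      rw [hfwd] at hle
      have hone := ncard_range_le_one h
      omega
    have h2 : ∃ w, Word (supp ν) w ∧ ∃ x y : S, x ≠ y ∧ w x = w y := by
      by_contra h
      push_neg at h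
      obtain ⟨F, hFk, hFsupp⟩ := keyC
      have hall : ∀ t, ktF F t = 3 := by
        intro t
        rcases Nat.eq_zero_or_pos t with rfl | ht
        · rw [ktF_zero, hcard]
        · have hw := fwd_word hFsupp t ht
          have hinj : Function.Injective (fwd F t) := by
            intro x y hxy
            by_contra hne'
            exact h _ hw x y hne' hxy
          unfold ktF
          rw [ncard_range_inj hinj, hcard]
      have h3 : kF F = 3 :=
        le_antisymm (by have := kF_le F 0; rw [hall 0] at this; exact this)
          (le_kF F 3 (fun t => (hall t).ge))
      omega
    have hreach : ∀ i j : S, ∃ w, Word (supp ν) w ∧ w i = j := by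
      intro i j
      obtain ⟨t, ht, hpos⟩ := hirr i j
      exact reach hP hcons t ht i j hpos
    obtain ⟨a, b, c, hab, hac, hbc, hcov, hblk⟩ := core hcard (supp ν) hno1 h2 hreach
    have hd : Disjoint ({a, b} : Finset S) {c} := by
      rw [Finset.disjoint_singleton_right]
      simp only [Finset.mem_insert, Finset.mem_singleton]
      push_neg
      exact ⟨Ne.symm hac, Ne.symm hbc⟩
    refine ⟨2, ![{a, b}, {c}], ?_, ?_, ?_, ?_, rfl⟩
    · intro r
      fin_cases r
      · simpa using Finset.insert_nonempty a {b}
      · simpa using Finset.singleton_nonempty c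
    · intro r s hrs
      fin_cases r <;> fin_cases s
      · exact absurd rfl hrs
      · simpa using hd
      · simpa using hd.symm
      · exact absurd rfl hrs
    · intro i
      rcases hcov i with rfl | rfl | rfl
      · exact ⟨0, by simp⟩
      · exact ⟨0, by simp⟩
      · exact ⟨1, by simp⟩
    · intro f hf
      rcases hblk f hf with ⟨hfa, hfb, hfc⟩ | ⟨hfa, hfb, hfc⟩
      · refine ⟨Equiv.refl _, ?_⟩
        intro r i hi
        fin_cases r
        · simp only [Fin.zero_eta, Equiv.refl_apply, Matrix.cons_val_zero,
            Finset.mem_insert, Finset.mem_singleton] at hi ⊢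
          rcases hi with rfl | rfl
          · exact hfa
          · exact hfb
        · simp only [Fin.mk_one, Equiv.refl_apply, Matrix.cons_val_one, Matrix.head_cons,
            Finset.mem_singleton, Matrix.cons_val_zero] at hi ⊢
          rw [hi]
          exact hfc
      · refine ⟨Equiv.swap 0 1, ?_⟩
        intro r i hi
        fin_cases r
        · have hsw : (Equiv.swap (0 : Fin 2) 1) 0 = 1 := Equiv.swap_apply_left 0 1
          simp only [Fin.zero_eta, Matrix.cons_val_zero, Finset.mem_insert,
            Finset.mem_singleton, hsw, Matrix.cons_val_one, Matrix.head_cons] at hi ⊢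
          rcases hi with rfl | rfl
          · exact hfa
          · exact hfb
        · have hsw : (Equiv.swap (0 : Fin 2) 1) 1 = 0 := Equiv.swap_apply_right 0 1
          simp only [Fin.mk_one, Matrix.cons_val_one, Matrix.head_cons,
            Finset.mem_singleton, hsw, Matrix.cons_val_zero, Finset.mem_insert] at hi ⊢
          rw [hi]
          exact hfc
  · -- k = 3 : all support functions are bijections; singleton partition
    have hinj : ∀ f ∈ supp ν, Function.Injective f := by
      intro f hf
      by_contra hni
      rw [Function.not_injective_iff] at hni
      obtain ⟨x, y, hxy, hne'⟩ := hni
      have hle := keyle (fun _ => f) 1 (fun _ => hf)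
      rw [fwd_one] at hle
      have h2 := ncard_range_noninj hcard hne' hxy
      omega
    let e := Fintype.equivFinOfCardEq hcard
    refine ⟨3, fun r => {e.symm r}, fun r => Finset.singleton_nonempty _, ?_, ?_, ?_, rfl⟩
    · intro r s hrs
      rw [Finset.disjoint_singleton]
      exact e.symm.injective.ne hrs
    · intro i
      exact ⟨e i, by simp⟩
    · intro f hf
      have hbij : Function.Bijective f := Finite.injective_iff_bijective.mp (hinj f hf)
      refine ⟨(e.symm.trans (Equiv.ofBijective f hbij)).trans e, ?_⟩
      intro r i hi
      rw [Finset.mem_singleton] at hi ⊢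
      subst hi
      simp [Equiv.ofBijective]

end CFTP
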